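/- arXiv:2504.14696 — 6 statements merged into one kernel-verified Lean document; each statement's English description precedes it below -/
import Mathlib

section
/- For real numbers q ∈ (0,1], k ≥ 2, n ≥ 1, and any p, p' ∈ [0,1] with |p - p'| ≤ 1/n, the ratio (q/k + (1-q)p') / (q/k + (1-q)p) is at most 1 + (1-q)k/(nq). -/
theorem roo_likelihood_ratio_bound
    (q k n p p' : ℝ)
    (hq0 : 0 < q) (hq1 : q ≤ 1)
    (hk : 2 ≤ k) (hn : 1 ≤ n)
    (hp0 : 0 ≤ p) (hp1 : p ≤ 1)
    (hp'0 : 0 ≤ p') (hp'1 : p' ≤ 1)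
    (hnear : |p - p'| ≤ 1 / n) :
    (q / k + (1 - q) * p') / (q / k + (1 - q) * p) ≤ 1 + (1 - q) * k / (n * q) := by
  have hn0 : (0:ℝ) < n := by linarith
  have hk0 : (0:ℝ) < k := by linarith
  have habs : p' - p ≤ 1 / n := by
    have := abs_le.mp hnear
    linarith [this.1]
  have hd : 0 < q / k + (1 - q) * p := by
    have : 0 < q / k := div_pos hq0 hk0
    nlinarith
  rw [div_le_iff₀ hd]
  have e1 : (1 - q) * k / (n * q) * (q / k) = (1 - q) / n := by
    field_simp
  have h2 : (1 - q) * (p' - p) ≤ (1 - q) * (1 / n) :=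
    mul_le_mul_of_nonneg_left habs (by linarith)
  have h3 : 0 ≤ (1 - q) * k / (n * q) * ((1 - q) * p) := by
    apply mul_nonneg
    · apply div_nonneg
      · nlinarith
      · positivity
    · nlinarith
  have h4 : (1 - q) * (1 / n) = (1 - q) / n := by ring
  nlinarith [h2, h3, e1]
end

section
/- Let k ≥ 2, n ≥ 1, ε > 0, and set q = 1/(1 + (n/k)(e^ε - 1)). Then for all p, p' ∈ [0,1] with |p - p'| ≤ 1/n, one has q/k + (1-q)p' ≤ e^ε (q/k + (1-q)p). In other words, the ROO mechanism with this choice of q is ε-differentially private. -/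
theorem roo_is_eps_dp
    (k n ε p p' : ℝ)
    (hk : 2 ≤ k) (hn : 1 ≤ n) (hε : 0 < ε)
    (hp0 : 0 ≤ p) (hp1 : p ≤ 1)
    (hp'0 : 0 ≤ p') (hp'1 : p' ≤ 1)
    (hnear : |p - p'| ≤ 1 / n)
    (q : ℝ) (hq : q = 1 / (1 + (n / k) * (Real.exp ε - 1))) :
    q / k + (1 - q) * p' ≤ Real.exp ε * (q / k + (1 - q) * p) := by
  have hk0 : (0:ℝ) < k := by linarith
  have hn0 : (0:ℝ) < n := by linarith
  have hE : 1 < Real.exp ε := by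
    calc (1:ℝ) = Real.exp 0 := by simp
    _ < Real.exp ε := Real.exp_lt_exp.mpr hε
  set E := Real.exp ε with hEdef
  have hE0 : 0 ≤ E - 1 := by linarith
  have hD : 0 < 1 + (n / k) * (E - 1) := by
    have : 0 ≤ (n / k) * (E - 1) := mul_nonneg (by positivity) hE0
    linarith
  have hp' : p' ≤ p + 1 / n := by
    have := (abs_le.mp hnear).1
    linarith
  have key : 1 + n * (E - 1) * p' ≤ E + E * (n * (E - 1) * p) := by
    have h1 : n * (E - 1) * p' ≤ n * (E - 1) * (p + 1/n) :=
      mul_le_mul_of_nonneg_left hp' (mul_nonneg hn0.le hE0)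
    have h2 : n * (E - 1) * (p + 1/n) = n * (E - 1) * p + (E - 1) := by
      field_simp
    have h3 : n * (E - 1) * p ≤ E * (n * (E - 1) * p) := by
      nlinarith [mul_nonneg (mul_nonneg hn0.le hE0) hp0]
    linarith
  subst hq
  have hkD : 0 < k * (1 + n / k * (E - 1)) := by positivity
  have expand : ∀ x : ℝ, 1 / (1 + n / k * (E - 1)) / k + (1 - 1 / (1 + n / k * (E - 1))) * x
      = (1 + n * (E - 1) * x) / (k * (1 + n / k * (E - 1))) := by
    intro x
    field_simp
    ring
  rw [expand, expand, ← mul_div_assoc, div_le_div_iff_of_pos_right hkD]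
  linarith [key]
end

section
/- For any real k ≥ 2, ε > 0, and α ∈ (0,1), the quantity (k(1-α) - 1)/(α(e^ε - 1)) is strictly less than (k-1)(1-α)/(αε). -/
theorem roo_sampling_complexity_lt_subrr
    (k ε α : ℝ) (hk : 2 ≤ k) (hε : 0 < ε) (hα0 : 0 < α) (hα1 : α < 1) :
    (k * (1 - α) - 1) / (α * (Real.exp ε - 1)) < (k - 1) * (1 - α) / (α * ε) := by
  have hexp : ε < Real.exp ε - 1 := by
    have := Real.add_one_lt_exp (ne_of_gt hε)
    linarith
  have hd1 : 0 < α * (Real.exp ε - 1) := mul_pos hα0 (by linarith)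
  have hd2 : 0 < α * ε := mul_pos hα0 hε
  have hnum : k * (1 - α) - 1 < (k - 1) * (1 - α) := by nlinarith
  have hpos : 0 < (k - 1) * (1 - α) := mul_pos (by linarith) (by linarith)
  calc (k * (1 - α) - 1) / (α * (Real.exp ε - 1))
      < (k - 1) * (1 - α) / (α * (Real.exp ε - 1)) := by
        exact div_lt_div_of_pos_right hnum hd1 |>.trans_le le_rfl
    _ < (k - 1) * (1 - α) / (α * ε) := by
        apply div_lt_div_of_pos_left hpos hd2
        exact mul_lt_mul_of_pos_left hexp hα0
end

section
/- Fix k ≥ 2, n > k, ε > 0, and define u_m = -m/n + 1/k - 1/n, v_m = e^ε(1/k - m/n), w_m = -1/n - m/n + (m/n)e^ε, q_0 = 1/(1 + (n/k)(e^ε - 1)), and recursively q_m = max{0, (u_m/v_m)q_{m-1} - w_m/v_m} for 1 ≤ m ≤ ⌊n/k⌋. Then the sequence (q_m) is non-increasing: q_m ≤ q_{m-1} for all 1 ≤ m ≤ ⌊n/k⌋. -/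
-- aux1: invariant step
lemma dsroo_aux1 (E p mm x : ℝ) (hE : 1 < E) (hp : 2 ≤ p) (hmm : 0 ≤ mm)
    (hx : (1 - mm*(E-1))/(p*(E-1)+1) ≤ x) :
    (1 - (mm+1)*(E-1))/((p-1)*(E-1)+1) ≤ (p-2)/(E*(p-1)) * x - ((mm+1)*(E-1)-1)/(E*(p-1)) := by
  have ha : 0 < E - 1 := by linarith
  have hD1 : 0 < p*(E-1)+1 := by nlinarith
  have hD2 : 0 < (p-1)*(E-1)+1 := by nlinarith
  have hEp : 0 < E*(p-1) := by nlinarith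
  have h1 : (p-2)/(E*(p-1)) * ((1 - mm*(E-1))/(p*(E-1)+1)) ≤ (p-2)/(E*(p-1)) * x :=
    mul_le_mul_of_nonneg_left hx (div_nonneg (by linarith) hEp.le)
  have h2 : (p-2)/(E*(p-1)) * ((1 - mm*(E-1))/(p*(E-1)+1)) - ((mm+1)*(E-1)-1)/(E*(p-1)) ≤
      (p-2)/(E*(p-1)) * x - ((mm+1)*(E-1)-1)/(E*(p-1)) := by linarith
  refine le_trans ?_ h2
  rw [div_mul_div_comm, div_sub_div _ _ (by positivity) (ne_of_gt hEp),
    div_le_div_iff₀ hD2 (by positivity)]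
  nlinarith [mul_nonneg (mul_nonneg (mul_nonneg (mul_nonneg
    (by linarith : (0:ℝ) ≤ p-2) (sq_nonneg (E-1))) (by linarith : (0:ℝ) ≤ p+mm)) hEp.le) hD2.le]

-- aux2: f monotone
lemma dsroo_aux2 (E p mm : ℝ) (hE : 1 < E) (hp : 1 ≤ p) (hmm : 0 ≤ mm) :
    (1 - (mm+1)*(E-1))/((p-1)*(E-1)+1) ≤ (1 - mm*(E-1))/(p*(E-1)+1) := by
  have ha : 0 < E - 1 := by linarith
  have hD1 : 0 < p*(E-1)+1 := by nlinarith
  have hD2 : 0 < (p-1)*(E-1)+1 := by nlinarith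
  rw [div_le_div_iff₀ hD2 hD1]
  nlinarith [mul_nonneg (mul_nonneg ha.le ha.le) (by linarith : (0:ℝ) ≤ p+mm)]

-- aux3: final step
lemma dsroo_aux3 (E p mm x : ℝ) (hE : 1 < E) (hp : 0 < p)
    (hx : (1 - mm*(E-1))/(p*(E-1)+1) ≤ x) :
    (p-1)/(E*p) * x - (mm*(E-1)-1)/(E*p) ≤ x := by
  have ha : 0 < E - 1 := by linarith
  have hD1 : 0 < p*(E-1)+1 := by nlinarith
  have hEp : 0 < E*p := by nlinarith
  have hxD : 1 - mm*(E-1) ≤ x*(p*(E-1)+1) := (div_le_iff₀ hD1).1 hx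
  rw [div_mul_eq_mul_div, div_sub_div_same, div_le_iff₀ hEp]
  nlinarith [hxD]

theorem dsroo_q_nonincreasing
    (k n : ℕ) (hk : 2 ≤ k) (hn : k < n) (ε : ℝ) (hε : 0 < ε)
    (u v w : ℕ → ℝ)
    (hu : ∀ m, u m = -(m : ℝ) / n + 1 / k - 1 / n)
    (hv : ∀ m, v m = Real.exp ε * (1 / k - (m : ℝ) / n))
    (hw : ∀ m, w m = -1 / n - (m : ℝ) / n + ((m : ℝ) / n) * Real.exp ε)
    (q : ℕ → ℝ)
    (hq0 : q 0 = 1 / (1 + ((n : ℝ) / k) * (Real.exp ε - 1)))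
    (hqm : ∀ m, 1 ≤ m → m ≤ n / k →
      q m = max 0 ((u m / v m) * q (m - 1) - w m / v m)) :
    ∀ m, 1 ≤ m → m ≤ n / k → q m ≤ q (m - 1) := by
  have hk0 : (0:ℝ) < k := by exact_mod_cast (by omega : 0 < k)
  have hn0 : (0:ℝ) < n := by exact_mod_cast (by omega : 0 < n)
  set E := Real.exp ε with hE_def
  have hE : 1 < E := by
    have h := Real.exp_lt_exp.mpr hε
    rwa [Real.exp_zero] at h
  have hE0 : (0:ℝ) < E := lt_trans zero_lt_one hE
  set r := (n:ℝ)/k with hr_def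
  have hr0 : 0 < r := div_pos hn0 hk0
  have hcast : ∀ m : ℕ, m ≤ n / k → (m:ℝ) ≤ r := by
    intro m hm
    have h1 : m * k ≤ n := (Nat.le_div_iff_mul_le (by omega)).1 hm
    have h2 : (m:ℝ) * k ≤ n := by exact_mod_cast h1
    rw [hr_def, le_div_iff₀ hk0]
    exact h2
  have hk_inv : (1:ℝ)/k = r/n := by
    rw [hr_def]
    field_simp
  -- invariant: q m ≥ f m
  have inv : ∀ m : ℕ, m ≤ n / k → (m:ℝ) + 1 ≤ r →
      (1 - (m:ℝ)*(E-1))/((r-(m:ℝ))*(E-1)+1) ≤ q m := by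
    intro m
    induction m with
    | zero =>
      intro _ _
      rw [hq0]
      push_cast
      apply le_of_eq
      ring
    | succ m ih =>
      intro h1 h2
      have hm2 : (m:ℝ) + 2 ≤ r := by push_cast at h2; linarith
      have hxm : (1 - (m:ℝ)*(E-1))/((r-(m:ℝ))*(E-1)+1) ≤ q m :=
        ih (by omega) (by linarith)
      have hq_succ : q (m+1) = max 0 ((u (m+1) / v (m+1)) * q m - w (m+1) / v (m+1)) := by
        have h := hqm (m+1) (by omega) h1
        simpa using h
      have hvden : r - (m:ℝ) - 1 ≠ 0 := by
        have : (1:ℝ) ≤ r - (m:ℝ) - 1 := by linarith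
        linarith
      have hu1 : u (m+1) = (r - (m:ℝ) - 2)/n := by
        rw [hu, hk_inv]; push_cast; ring
      have hv1 : v (m+1) = (E*(r - (m:ℝ) - 1))/n := by
        rw [hv, hk_inv]; push_cast; ring
      have hw1 : w (m+1) = (((m:ℝ)+1)*(E-1)-1)/n := by
        rw [hw]; push_cast; ring
      have huv : u (m+1) / v (m+1) = (r - (m:ℝ) - 2)/(E*(r - (m:ℝ) - 1)) := by
        rw [hu1, hv1]
        field_simp
      have hwv : w (m+1) / v (m+1) = (((m:ℝ)+1)*(E-1)-1)/(E*(r - (m:ℝ) - 1)) := by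
        rw [hw1, hv1]
        field_simp
      rw [hq_succ, huv, hwv]
      have key := dsroo_aux1 E (r - (m:ℝ)) (m:ℝ) (q m) hE (by linarith) (by positivity) hxm
      refine le_trans ?_ (le_trans key (le_max_right _ _))
      apply le_of_eq
      push_cast
      ring
  -- main argument
  intro m hm1 hm2
  have hq_cur : q m = max 0 ((u m / v m) * q (m - 1) - w m / v m) := hqm m hm1 hm2
  have hmr : (m:ℝ) ≤ r := hcast m hm2
  have hm1R : (1:ℝ) ≤ (m:ℝ) := by exact_mod_cast hm1
  have hqprev_nonneg : 0 ≤ q (m-1) := by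
    rcases Nat.lt_or_ge m 2 with h | h
    · have hmeq : m = 1 := by omega
      subst hmeq
      simp only [Nat.sub_self]
      rw [hq0]
      have hden : (0:ℝ) < 1 + r*(E-1) := by nlinarith
      positivity
    · have h3 := hqm (m-1) (by omega) (by omega)
      rw [h3]
      exact le_max_left _ _
  have hcast1 : ((m-1:ℕ):ℝ) = (m:ℝ) - 1 := by
    rw [Nat.cast_sub hm1]; simp
  rcases lt_or_eq_of_le hmr with hmlt | hmeq
  · -- v m > 0 case
    have hrm : 0 < r - (m:ℝ) := by linarith
    have hinvprev : (1 - ((m:ℝ)-1)*(E-1))/((r-((m:ℝ)-1))*(E-1)+1) ≤ q (m-1) := by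
      have h := inv (m-1) (by omega) (by rw [hcast1]; linarith)
      rwa [hcast1] at h
    have hf : (1 - (m:ℝ)*(E-1))/((r-(m:ℝ))*(E-1)+1) ≤ q (m-1) := by
      refine le_trans ?_ hinvprev
      have ha : 0 < E - 1 := by linarith
      have hD1 : 0 < (r-(m:ℝ))*(E-1)+1 := by nlinarith
      have hD2 : 0 < (r-((m:ℝ)-1))*(E-1)+1 := by nlinarith
      rw [div_le_div_iff₀ hD1 hD2]
      nlinarith [mul_nonneg (mul_nonneg ha.le ha.le) hr0.le]
    have hu1 : u m = (r - (m:ℝ) - 1)/n := by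
      rw [hu, hk_inv]; ring
    have hv1 : v m = (E*(r - (m:ℝ)))/n := by
      rw [hv, hk_inv]; ring
    have hw1 : w m = ((m:ℝ)*(E-1)-1)/n := by
      rw [hw]; ring
    have huv : u m / v m = (r - (m:ℝ) - 1)/(E*(r - (m:ℝ))) := by
      rw [hu1, hv1]
      field_simp
    have hwv : w m / v m = ((m:ℝ)*(E-1)-1)/(E*(r - (m:ℝ))) := by
      rw [hw1, hv1]
      field_simp
    rw [hq_cur, huv, hwv]
    exact max_le hqprev_nonneg (dsroo_aux3 E (r - (m:ℝ)) (m:ℝ) (q (m-1)) hE hrm hf)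
  · -- boundary case: v m = 0
    have hv0 : v m = 0 := by
      rw [hv, hk_inv, ← hmeq]
      ring
    rw [hq_cur, hv0]
    simpa using hqprev_nonneg
end

section
/- Fix k ≥ 2, n > k, ε > 0, and define t_m = w_m/(u_m - v_m) where u_m = -m/n + 1/k - 1/n, v_m = e^ε(1/k - m/n), w_m = -1/n - m/n + (m/n)e^ε. Then t_0 = 1/(1 + (n/k)(e^ε - 1)), and t_m is strictly decreasing in m for 0 ≤ m < n/k; explicitly, t_m = 1 - ((1/k)(e^ε - 1))/((1/k - m/n)(e^ε - 1) + 1/n). -/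
theorem dsroo_t_formula_and_decreasing
    (k n : ℕ) (hk : 2 ≤ k) (hn : k < n) (ε : ℝ) (hε : 0 < ε)
    (u v w t : ℕ → ℝ)
    (hu : ∀ m, u m = -(m : ℝ) / n + 1 / k - 1 / n)
    (hv : ∀ m, v m = Real.exp ε * (1 / k - (m : ℝ) / n))
    (hw : ∀ m, w m = -1 / n - (m : ℝ) / n + ((m : ℝ) / n) * Real.exp ε)
    (ht : ∀ m, t m = w m / (u m - v m)) :
    t 0 = 1 / (1 + ((n : ℝ) / k) * (Real.exp ε - 1)) ∧
    (∀ m : ℕ, (m : ℝ) < (n : ℝ) / k →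
      t m = 1 - ((1 / k) * (Real.exp ε - 1)) /
        ((1 / k - (m : ℝ) / n) * (Real.exp ε - 1) + 1 / n)) ∧
    (∀ m : ℕ, ((m : ℝ) + 1) < (n : ℝ) / k → t (m + 1) < t m) := by
  have hk0 : (0:ℝ) < k := by exact_mod_cast (by omega : 0 < k)
  have hn0 : (0:ℝ) < n := by exact_mod_cast (by omega : 0 < n)
  have hE : 1 < Real.exp ε := by
    have := Real.exp_lt_exp.mpr hε
    simpa using this
  set E := Real.exp ε with hEdef
  have key : ∀ m : ℕ, (m:ℝ) < (n:ℝ) / k →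
      t m = 1 - ((1/k) * (E-1)) / ((1/k - (m:ℝ)/n)*(E-1) + 1/n) := by
    intro m hm
    have hfrac : (m:ℝ)/n < 1/k := by
      rw [div_lt_div_iff₀ hn0 hk0]
      have := (lt_div_iff₀ hk0).mp hm
      linarith
    have hD : 0 < (1/(k:ℝ) - (m:ℝ)/n)*(E-1) + 1/n :=
      add_pos (mul_pos (sub_pos.mpr hfrac) (sub_pos.mpr hE)) (by positivity)
    have hne : -(m:ℝ)/n + 1/k - 1/n - E*(1/k - (m:ℝ)/n) ≠ 0 := by
      have h : -(m:ℝ)/n + 1/k - 1/n - E*(1/k - (m:ℝ)/n)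
          = -((1/(k:ℝ) - (m:ℝ)/n)*(E-1) + 1/n) := by ring
      rw [h]
      exact neg_ne_zero.mpr (ne_of_gt hD)
    rw [ht, hu, hv, hw,
      show (-(m:ℝ)/n + 1/k - 1/n) - E*(1/k - (m:ℝ)/n)
        = -((1/(k:ℝ) - (m:ℝ)/n)*(E-1) + 1/n) from by ring,
      div_neg, ← neg_div, eq_sub_iff_add_eq, ← add_div,
      div_eq_one_iff_eq hD.ne']
    ring
  have hEpos : (0:ℝ) < (1/(k:ℝ)) * (E - 1) := by
    have := sub_pos.mpr hE
    positivity
  refine ⟨?_, key, ?_⟩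
  · have h0 : ((0:ℕ):ℝ) < (n:ℝ)/k := by
      simp; positivity
    have := key 0 h0
    rw [this]
    have hE1 : (0:ℝ) < E - 1 := sub_pos.mpr hE
    have hD : 0 < (1/(k:ℝ) - ((0:ℕ):ℝ)/n)*(E-1) + 1/n := by
      simp only [Nat.cast_zero, zero_div, sub_zero]
      positivity
    have hD2 : 0 < 1 + ((n:ℝ)/k) * (E - 1) := by positivity
    simp only [Nat.cast_zero, zero_div, sub_zero] at hD ⊢
    field_simp
    ring
  · intro m hm
    have hm1 : (m:ℝ) < (n:ℝ)/k := by linarith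
    have hm2 : ((m+1:ℕ):ℝ) < (n:ℝ)/k := by push_cast; linarith
    have hfrac : (m:ℝ)/n < 1/k := by
      rw [div_lt_div_iff₀ hn0 hk0]
      have := (lt_div_iff₀ hk0).mp hm1
      linarith
    have hfrac2 : ((m:ℝ)+1)/n < 1/k := by
      rw [div_lt_div_iff₀ hn0 hk0]
      have := (lt_div_iff₀ hk0).mp hm2
      push_cast at this
      linarith
    have hD : 0 < (1/(k:ℝ) - (m:ℝ)/n)*(E-1) + 1/n :=
      add_pos (mul_pos (sub_pos.mpr hfrac) (sub_pos.mpr hE)) (by positivity)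
    have hD2 : 0 < (1/(k:ℝ) - ((m:ℝ)+1)/n)*(E-1) + 1/n :=
      add_pos (mul_pos (sub_pos.mpr hfrac2) (sub_pos.mpr hE)) (by positivity)
    have hlt : (1/(k:ℝ) - ((m:ℝ)+1)/n)*(E-1) + 1/n
        < (1/(k:ℝ) - (m:ℝ)/n)*(E-1) + 1/n := by
      have h1 : (m:ℝ)/n < ((m:ℝ)+1)/n := by
        gcongr
        · linarith
      have hE1 : (0:ℝ) < E - 1 := sub_pos.mpr hE
      nlinarith
    rw [key m hm1, key (m+1) hm2]
    push_cast
    have := div_lt_div_of_pos_left hEpos hD2 hlt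
    linarith
end

section
/- Fix k ≥ 2, n > k, ε > 0, and let u_m, v_m, w_m, and the non-increasing sequence q_m ∈ [0,1] be as in DS-ROO. Then for m = 0: u_0 q_1 < v_0 q_0 + w_0, and for each integer m with 1 ≤ m ≤ ⌊n/k⌋ - 1: u_m q_{m+1} ≤ v_m q_m + w_m. -/
theorem dsroo_dp_condition_m_plus_one
    (k n : ℕ) (hk : 2 ≤ k) (hn : k < n) (ε : ℝ) (hε : 0 < ε)
    (u v w : ℕ → ℝ)
    (hu : ∀ m, u m = -(m : ℝ) / n + 1 / k - 1 / n)
    (hv : ∀ m, v m = Real.exp ε * (1 / k - (m : ℝ) / n))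
    (hw : ∀ m, w m = -1 / n - (m : ℝ) / n + ((m : ℝ) / n) * Real.exp ε)
    (q : ℕ → ℝ)
    (hq01 : ∀ m, 0 ≤ q m ∧ q m ≤ 1)
    (hmono : ∀ m m', m ≤ m' → q m' ≤ q m)
    (hq0 : q 0 = 1 / (1 + ((n : ℝ) / k) * (Real.exp ε - 1)))
    (hqm : ∀ m, 1 ≤ m → m ≤ n / k →
      q m = max 0 ((u m / v m) * q (m - 1) - w m / v m)) :
    u 0 * q 1 < v 0 * q 0 + w 0 ∧
    ∀ m, 1 ≤ m → m ≤ n / k - 1 → u m * q (m + 1) ≤ v m * q m + w m := by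
  have hk0 : (0:ℝ) < (k:ℝ) := by exact_mod_cast (by omega : 0 < k)
  have hn0 : (0:ℝ) < (n:ℝ) := by exact_mod_cast (by omega : 0 < n)
  have hkn : (k:ℝ) < (n:ℝ) := by exact_mod_cast hn
  have hE : 1 < Real.exp ε := by
    have := Real.add_one_lt_exp (ne_of_gt hε)
    linarith
  have hEpos : 0 < Real.exp ε := Real.exp_pos ε
  have hD : 0 < 1 + ((n : ℝ) / k) * (Real.exp ε - 1) := by
    have h1 : 0 < (n:ℝ)/k := by positivity
    nlinarith
  have hKD : (0:ℝ) < (k:ℝ) + n * (Real.exp ε - 1) := by nlinarith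
  have hq0' : q 0 = (k:ℝ) / ((k:ℝ) + n * (Real.exp ε - 1)) := by
    rw [hq0, div_eq_div_iff (ne_of_gt hD) (ne_of_gt hKD)]
    field_simp
  have hq0pos : 0 < q 0 := by rw [hq0']; positivity
  have h1nk : 1 ≤ n / k := (Nat.one_le_div_iff (by omega)).mpr (le_of_lt hn)
  have hinv : (1:ℝ)/n < 1/k := one_div_lt_one_div_of_lt hk0 hkn
  constructor
  · -- m = 0 case
    have hv1 : 0 < v 1 := by
      rw [hv]
      push_cast
      nlinarith
    have hlt : u 1 / v 1 * q 0 - w 1 / v 1 < q 0 := by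
      rw [div_mul_eq_mul_div, ← sub_div, div_lt_iff₀ hv1, hu, hv, hw]
      push_cast
      have hdiff : q 0 * (Real.exp ε * (1 / (k:ℝ) - 1 / n))
          - ((-1 / (n:ℝ) + 1 / k - 1 / n) * q 0 - (-1 / n - 1 / n + 1 / n * Real.exp ε))
          = (Real.exp ε - 1)^2 / ((k:ℝ) + n * (Real.exp ε - 1)) := by
        rw [hq0']; field_simp; ring
      have hpos : 0 < (Real.exp ε - 1)^2 / ((k:ℝ) + n * (Real.exp ε - 1)) :=
        div_pos (pow_pos (sub_pos.mpr hE) 2) hKD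
      linarith
    have hq1lt : q 1 < q 0 := by
      rw [hqm 1 le_rfl h1nk]
      exact max_lt hq0pos hlt
    have hu0 : 0 < u 0 := by
      rw [hu]; simp only [Nat.cast_zero, neg_zero, zero_div]; linarith
    have heq : v 0 * q 0 + w 0 = u 0 * q 0 := by
      rw [hu, hv, hw, hq0']
      push_cast
      field_simp
      ring
    rw [heq]
    exact mul_lt_mul_of_pos_left hq1lt hu0
  · intro m hm1 hm2
    have hm1k : m + 1 ≤ n / k := by omega
    have hmk : (m + 1) * k ≤ n := (Nat.le_div_iff_mul_le (by omega)).mp hm1k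
    have hmkR : ((m:ℝ) + 1) * k ≤ (n:ℝ) := by exact_mod_cast hmk
    have hvm : 0 < v m := by
      rw [hv]
      have h1 : (m:ℝ) * k < n := by nlinarith
      have h2 : (m:ℝ)/n < 1/k := by
        rw [div_lt_div_iff₀ hn0 hk0]; linarith
      nlinarith
    have hum : 0 ≤ u m := by
      rw [hu]
      have h2 : ((m:ℝ) + 1)/n ≤ 1/k := by
        rw [div_le_div_iff₀ hn0 hk0]; linarith
      have h3 : -(m:ℝ)/n + 1/k - 1/n = 1/k - ((m:ℝ)+1)/n := by ring
      linarith [h3 ▸ sub_nonneg.mpr h2]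
    have key : u m * q (m - 1) - w m ≤ v m * q m := by
      have h' : u m / v m * q (m - 1) - w m / v m ≤ q m := by
        rw [hqm m hm1 (by omega)]
        exact le_max_right _ _
      rw [div_mul_eq_mul_div, ← sub_div, div_le_iff₀ hvm] at h'
      linarith
    have hmono' : q (m + 1) ≤ q (m - 1) := hmono _ _ (by omega)
    have := mul_le_mul_of_nonneg_left hmono' hum
    linarith
end
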